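/- Each invariant vector field ξ_i is invariant under every transformation τ_z: for all z ∈ ℝ⁴, all x ∈ ℝ⁴, and all i, j ∈ {1,2,3,4}, ξ_i^j(τ_z(x)) = Σ_k (∂τ_z^j/∂x^k)(x) · ξ_i^k(x). -/
import Mathlib


/-- Partial derivative `∂f/∂xⁱ` of a real-valued function on `ℝ⁴`. -/
noncomputable def pd (i : Fin 4) (f : (Fin 4 → ℝ) → ℝ) (x : Fin 4 → ℝ) : ℝ :=
  fderiv ℝ f x (Pi.single i 1)
/-- The transformation `τ_z : ℝ⁴ → ℝ⁴` (indices `0,…,3` for coordinates `1,…,4`). -/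
noncomputable def τ (k : ℝ) (z x : Fin 4 → ℝ) : Fin 4 → ℝ :=
  ![x 0 - z 0 + 2 * z 3 - k * Real.exp (k * z 3 / 2) * z 2 * x 3,
    x 1 - z 3,
    x 2 * Real.exp (-(k * z 3) / 2) - z 2,
    x 3 * Real.exp (k * z 3 / 2) - z 1]
/-- The invariant vector fields `ξ₁,…,ξ₄` (indices `0,…,3`). -/
noncomputable def ξ (k : ℝ) (i : Fin 4) (x : Fin 4 → ℝ) : Fin 4 → ℝ :=
  ![![-1, 0, 0, 0],
    ![-k * x 2 * Real.exp (-(k * x 1) / 2), 0, 0, -Real.exp (-(k * x 1) / 2)],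
    ![0, 0, -Real.exp (k * x 1 / 2), 0],
    ![2, -1, 0, 0]] i

lemma pd_lin2 (a b c : ℝ) (l : Fin 4) (x : Fin 4 → ℝ) :
    pd l (fun y => a * y 0 + b * y 3 + c) x
      = a * (Pi.single l 1 : Fin 4 → ℝ) 0 + b * (Pi.single l 1 : Fin 4 → ℝ) 3 := by
  have h : HasFDerivAt (fun y : Fin 4 → ℝ => a * y 0 + b * y 3 + c)
      (a • (ContinuousLinearMap.proj 0 : (Fin 4 → ℝ) →L[ℝ] ℝ)
        + b • (ContinuousLinearMap.proj 3 : (Fin 4 → ℝ) →L[ℝ] ℝ)) x :=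
    (((ContinuousLinearMap.proj (R := ℝ) (φ := fun _ : Fin 4 => ℝ)
      0).hasFDerivAt.const_mul a).add
      ((ContinuousLinearMap.proj (R := ℝ) (φ := fun _ : Fin 4 => ℝ)
        3).hasFDerivAt.const_mul b)).add_const c
  rw [pd, h.fderiv]
  simp

lemma pd_lin (a c : ℝ) (m l : Fin 4) (x : Fin 4 → ℝ) :
    pd l (fun y => a * y m + c) x = a * (Pi.single l 1 : Fin 4 → ℝ) m := by
  have h : HasFDerivAt (fun y : Fin 4 → ℝ => a * y m + c)
      (a • (ContinuousLinearMap.proj m : (Fin 4 → ℝ) →L[ℝ] ℝ)) x :=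
    ((ContinuousLinearMap.proj (R := ℝ) (φ := fun _ : Fin 4 => ℝ)
      m).hasFDerivAt.const_mul a).add_const c
  rw [pd, h.fderiv]
  simp

lemma pd_tau0 (k : ℝ) (z x : Fin 4 → ℝ) (l : Fin 4) :
    pd l (fun y => τ k z y 0) x
      = 1 * (Pi.single l 1 : Fin 4 → ℝ) 0
        + (-(k * Real.exp (k * z 3 / 2) * z 2)) * (Pi.single l 1 : Fin 4 → ℝ) 3 := by
  have h : (fun y : Fin 4 → ℝ => τ k z y 0)
      = fun y => 1 * y 0 + (-(k * Real.exp (k * z 3 / 2) * z 2)) * y 3 + (- z 0 + 2 * z 3) := by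
    funext y; simp [τ]; ring
  rw [h, pd_lin2]

lemma pd_tau1 (k : ℝ) (z x : Fin 4 → ℝ) (l : Fin 4) :
    pd l (fun y => τ k z y 1) x = 1 * (Pi.single l 1 : Fin 4 → ℝ) 1 := by
  have h : (fun y : Fin 4 → ℝ => τ k z y 1) = fun y => 1 * y 1 + (- z 3) := by
    funext y; simp [τ]; ring
  rw [h, pd_lin]

lemma pd_tau2 (k : ℝ) (z x : Fin 4 → ℝ) (l : Fin 4) :
    pd l (fun y => τ k z y 2) x
      = Real.exp (-(k * z 3) / 2) * (Pi.single l 1 : Fin 4 → ℝ) 2 := by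
  have h : (fun y : Fin 4 → ℝ => τ k z y 2)
      = fun y => Real.exp (-(k * z 3) / 2) * y 2 + (- z 2) := by
    funext y; simp [τ]; ring
  rw [h, pd_lin]

lemma pd_tau3 (k : ℝ) (z x : Fin 4 → ℝ) (l : Fin 4) :
    pd l (fun y => τ k z y 3) x
      = Real.exp (k * z 3 / 2) * (Pi.single l 1 : Fin 4 → ℝ) 3 := by
  have h : (fun y : Fin 4 → ℝ => τ k z y 3)
      = fun y => Real.exp (k * z 3 / 2) * y 3 + (- z 1) := by
    funext y; simp [τ]; ring
  rw [h, pd_lin]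

lemma aux (k : ℝ) (z x : Fin 4 → ℝ) (i : Fin 4) :
    ∀ j : Fin 4, ξ k i (τ k z x) j = ∑ l : Fin 4, pd l (fun y => τ k z y j) x * ξ k i x l := by
  have kA : Real.exp (-(k * x 1) / 2) = (Real.exp (k * x 1 / 2))⁻¹ := by
    rw [← Real.exp_neg]; ring_nf
  have kB : Real.exp (-(k * z 3) / 2) = (Real.exp (k * z 3 / 2))⁻¹ := by
    rw [← Real.exp_neg]; ring_nf
  have key1 : Real.exp (-(k * (x 1 - z 3)) / 2)
      = (Real.exp (k * x 1 / 2))⁻¹ * Real.exp (k * z 3 / 2) := by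
    rw [← Real.exp_neg, ← Real.exp_add]; ring_nf
  have key2 : Real.exp (k * (x 1 - z 3) / 2)
      = Real.exp (k * x 1 / 2) * (Real.exp (k * z 3 / 2))⁻¹ := by
    rw [← Real.exp_neg, ← Real.exp_add]; ring_nf
  have h0 : ξ k i (τ k z x) 0 = ∑ l : Fin 4, pd l (fun y => τ k z y 0) x * ξ k i x l := by
    simp only [Fin.sum_univ_four, pd_tau0]
    fin_cases i <;>
      simp [ξ, τ, Pi.single_apply, Matrix.vecHead, Matrix.vecTail, key1, key2, kA, kB] <;>
      first
        | ring1
        | (field_simp; try ring1)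
  have h1 : ξ k i (τ k z x) 1 = ∑ l : Fin 4, pd l (fun y => τ k z y 1) x * ξ k i x l := by
    simp only [Fin.sum_univ_four, pd_tau1]
    fin_cases i <;>
      simp [ξ, τ, Pi.single_apply, Matrix.vecHead, Matrix.vecTail, key1, key2, kA, kB] <;>
      first
        | ring1
        | (field_simp; try ring1)
  have h2 : ξ k i (τ k z x) 2 = ∑ l : Fin 4, pd l (fun y => τ k z y 2) x * ξ k i x l := by
    simp only [Fin.sum_univ_four, pd_tau2]
    fin_cases i <;>
      simp [ξ, τ, Pi.single_apply, Matrix.vecHead, Matrix.vecTail, key1, key2, kA, kB] <;>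
      first
        | ring1
        | (field_simp; try ring1)
  have h3 : ξ k i (τ k z x) 3 = ∑ l : Fin 4, pd l (fun y => τ k z y 3) x * ξ k i x l := by
    simp only [Fin.sum_univ_four, pd_tau3]
    fin_cases i <;>
      simp [ξ, τ, Pi.single_apply, Matrix.vecHead, Matrix.vecTail, key1, key2, kA, kB] <;>
      first
        | ring1
        | (field_simp; try ring1)
  intro j
  fin_cases j
  exacts [h0, h1, h2, h3]


/-- Each invariant field `ξ_i` is invariant under every `τ_z`:
`ξ_i^j(τ_z x) = Σ_k (∂τ_z^j/∂x^k)(x) ξ_i^k(x)`. -/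
theorem xi_invariant (k : ℝ) (hk : 0 < k) (z x : Fin 4 → ℝ) (i j : Fin 4) :
    ξ k i (τ k z x) j = ∑ l : Fin 4, pd l (fun y => τ k z y j) x * ξ k i x l := by
  exact aux k z x i j
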